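/- arXiv:2312.09137 — 5 statements merged into one kernel-verified Lean document; each statement's English description precedes it below -/
import Mathlib

section
/- Let f(x) = Σ_{d=-D}^D c_d e^{2πidx} with c_d = c_{-d}, c_0 = 0, and c_d ≥ 0 for all d ∈ {1,…,D}, f not identically zero. Let (a_n) be any sequence of positive integers, U ~ Unif(0,1), and S_n = Σ_{j=1}^n f(a_j U). Then E[S_n^2] ≥ 2n Σ_{d=1}^D c_d^2 > 0 for all n. -/
open Real MeasureTheory intervalIntegral

lemma intCos (m : ℤ) : ∫ x in (0:ℝ)..1, Real.cos (2*π*m*x) = if m = 0 then 1 else 0 := by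
  rcases eq_or_ne m 0 with h | h
  · simp [h]
  · have hm : (m:ℝ) ≠ 0 := Int.cast_ne_zero.mpr h
    have hc : (2*π*m : ℝ) ≠ 0 := by
      exact mul_ne_zero (mul_ne_zero two_ne_zero Real.pi_ne_zero) hm
    have key : ∀ x ∈ Set.uIcc (0:ℝ) 1,
        HasDerivAt (fun y => Real.sin (2*π*m*y) / (2*π*m)) (Real.cos (2*π*m*x)) x := by
      intro x _
      have h1 : HasDerivAt (fun y : ℝ => 2*π*m*y) (2*π*m) x := by
        simpa using (hasDerivAt_id x).const_mul (2*π*(m:ℝ))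
      have h2 := (Real.hasDerivAt_sin (2*π*m*x)).comp x h1
      have h3 := h2.div_const (2*π*m)
      rw [mul_div_cancel_right₀ _ hc] at h3
      exact h3
    rw [intervalIntegral.integral_eq_sub_of_hasDerivAt key
      ((Real.continuous_cos.comp (by continuity)).intervalIntegrable _ _)]
    have hz : Real.sin (2*π*m*1) = 0 := by
      have : (2*π*(m:ℝ)*1 : ℝ) = ((2*m : ℤ):ℝ) * π := by push_cast; ring
      rw [this, Real.sin_int_mul_pi]
    have hz2 : Real.sin (2*π*m) = 0 := by simpa using hz
    simp [hz2, h]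

lemma contCos (k : ℤ) : Continuous fun x : ℝ => Real.cos (2*π*k*x) :=
  Real.continuous_cos.comp (by continuity)

lemma intCosMul (m m' : ℤ) :
    ∫ x in (0:ℝ)..1, Real.cos (2*π*m*x) * Real.cos (2*π*m'*x)
      = ((if m = m' then (1:ℝ) else 0) + (if m = -m' then 1 else 0))/2 := by
  have hpt : ∀ x : ℝ, Real.cos (2*π*m*x) * Real.cos (2*π*m'*x)
      = (Real.cos (2*π*((m - m' : ℤ):ℝ)*x) + Real.cos (2*π*((m + m' : ℤ):ℝ)*x))/2 := by
    intro x
    have e1 : (2*π*((m - m' : ℤ):ℝ)*x) = 2*π*m*x - 2*π*m'*x := by push_cast; ring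
    have e2 : (2*π*((m + m' : ℤ):ℝ)*x) = 2*π*m*x + 2*π*m'*x := by push_cast; ring
    rw [e1, e2, Real.cos_sub, Real.cos_add]; ring
  have : (∫ x in (0:ℝ)..1, Real.cos (2*π*m*x) * Real.cos (2*π*m'*x))
      = ∫ x in (0:ℝ)..1, (Real.cos (2*π*((m - m' : ℤ):ℝ)*x) + Real.cos (2*π*((m + m' : ℤ):ℝ)*x))/2 := by
    apply intervalIntegral.integral_congr
    intro x _
    exact hpt x
  rw [this, intervalIntegral.integral_div,
    intervalIntegral.integral_add ((contCos _).intervalIntegrable _ _)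
      ((contCos _).intervalIntegrable _ _), intCos, intCos]
  have h1 : (m - m' = 0) = (m = m') := by simp [sub_eq_zero]
  have h2 : (m + m' = 0) = (m = -m') := by
    simp [add_eq_zero_iff_eq_neg]
  simp only [h1, h2]
open Real in
/-- If additionally the coefficients `c_d`, `d ∈ {1,…,D}`, are nonnegative and `f ≢ 0`, then
for every `n ≥ 1`, `E[S_n ^ 2] ≥ 2 n ∑_{d=1}^D c_d ^ 2 > 0`. -/
theorem stmt3 (D : ℕ) (c : ℤ → ℝ) (hsym : ∀ d, c (-d) = c d) (h0 : c 0 = 0)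
    (hnn : ∀ d ∈ Finset.Icc (1:ℤ) D, 0 ≤ c d)
    (hne : ∃ d ∈ Finset.Icc (1:ℤ) D, c d ≠ 0)
    (f : ℝ → ℝ)
    (hf : ∀ x, f x = ∑ d ∈ Finset.Icc (-(D:ℤ)) D, c d * Real.cos (2 * π * d * x))
    (a : ℕ → ℕ) (hpos : ∀ n, 0 < a n) (n : ℕ) (hn : 1 ≤ n) :
    0 < 2 * (n : ℝ) * ∑ d ∈ Finset.Icc (1:ℤ) D, (c d) ^ 2 ∧
    2 * (n : ℝ) * ∑ d ∈ Finset.Icc (1:ℤ) D, (c d) ^ 2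
      ≤ ∫ x in (0:ℝ)..1, (∑ j ∈ Finset.Icc 1 n, f (a j * x)) ^ 2 := by
  -- positivity of the sum of squares
  obtain ⟨d0, hd0, hd0ne⟩ := hne
  have hD1 : (1:ℤ) ≤ D := by
    rw [Finset.mem_Icc] at hd0; omega
  have hsumpos : 0 < ∑ d ∈ Finset.Icc (1:ℤ) D, (c d) ^ 2 := by
    apply Finset.sum_pos' (fun i _ => sq_nonneg _)
    exact ⟨d0, hd0, pow_two_pos_of_ne_zero hd0ne⟩
  have hnpos : (0:ℝ) < n := by exact_mod_cast hn
  refine ⟨by positivity, ?_⟩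
  -- nonnegativity of all coefficients in range
  have hc : ∀ d ∈ Finset.Icc (-(D:ℤ)) (D:ℤ), 0 ≤ c d := by
    intro d hd
    rw [Finset.mem_Icc] at hd
    rcases lt_trichotomy d 0 with h | h | h
    · have : c d = c (-d) := by
        have := hsym (-d); simpa using this
      rw [this]
      exact hnn _ (Finset.mem_Icc.mpr ⟨by omega, by omega⟩)
    · simp [h, h0]
    · exact hnn _ (Finset.mem_Icc.mpr ⟨by omega, hd.2⟩)
  set P : Finset (ℕ × ℤ) := Finset.Icc 1 n ×ˢ Finset.Icc (-(D:ℤ)) (D:ℤ) with hP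
  set m : ℕ × ℤ → ℤ := fun p => p.2 * a p.1 with hm
  -- rewrite the sum
  have hS : ∀ x : ℝ, (∑ j ∈ Finset.Icc 1 n, f (a j * x))
      = ∑ p ∈ P, c p.2 * Real.cos (2*π*(m p)*x) := by
    intro x
    rw [hP, Finset.sum_product]
    apply Finset.sum_congr rfl
    intro j _
    rw [hf]
    apply Finset.sum_congr rfl
    intro d _
    congr 1
    push_cast [hm]
    ring
  -- value of each cross term
  set val : ℕ × ℤ → ℕ × ℤ → ℝ := fun p q =>
    c p.2 * c q.2 * (((if m p = m q then (1:ℝ) else 0) + (if m p = -(m q) then 1 else 0))/2)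
    with hval
  have hvalnn : ∀ p ∈ P, ∀ q ∈ P, 0 ≤ val p q := by
    intro p hp q hq
    rw [hP, Finset.mem_product] at hp hq
    apply mul_nonneg (mul_nonneg (hc _ hp.2) (hc _ hq.2))
    have : (0:ℝ) ≤ (if m p = m q then (1:ℝ) else 0) := by positivity
    have : (0:ℝ) ≤ (if m p = -(m q) then (1:ℝ) else 0) := by positivity
    positivity
  -- compute the integral
  have hint : (∫ x in (0:ℝ)..1, (∑ j ∈ Finset.Icc 1 n, f (a j * x)) ^ 2)
      = ∑ p ∈ P, ∑ q ∈ P, val p q := by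
    have step1 : (∫ x in (0:ℝ)..1, (∑ j ∈ Finset.Icc 1 n, f (a j * x)) ^ 2)
        = ∫ x in (0:ℝ)..1, ∑ p ∈ P, ∑ q ∈ P,
            (c p.2 * c q.2) * (Real.cos (2*π*(m p)*x) * Real.cos (2*π*(m q)*x)) := by
      apply intervalIntegral.integral_congr
      intro x _
      dsimp only
      rw [hS x, sq, Finset.sum_mul_sum]
      apply Finset.sum_congr rfl; intro p _
      apply Finset.sum_congr rfl; intro q _
      ring
    rw [step1, intervalIntegral.integral_finset_sum]
    · apply Finset.sum_congr rfl
      intro p _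
      rw [intervalIntegral.integral_finset_sum]
      · apply Finset.sum_congr rfl
        intro q _
        rw [intervalIntegral.integral_const_mul, intCosMul]
      · intro q _
        exact (Continuous.mul continuous_const ((contCos _).mul (contCos _))).intervalIntegrable _ _
    · intro p _
      apply Continuous.intervalIntegrable
      apply continuous_finset_sum
      intro q _
      exact Continuous.mul continuous_const ((contCos _).mul (contCos _))
  rw [hint]
  -- lower bound the double sum by the diagonal contributions
  have key : ∀ p ∈ P, (c p.2) ^ 2 ≤ ∑ q ∈ P, val p q := by
    intro p hp
    have hp' := hp
    rw [hP, Finset.mem_product, Finset.mem_Icc, Finset.mem_Icc] at hp'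
    rcases eq_or_ne p.2 0 with hz | hz
    · rw [hz, h0]
      simpa using Finset.sum_nonneg (fun q hq => hvalnn p hp q hq)
    · set q2 : ℕ × ℤ := (p.1, -p.2) with hq2
      have hq2P : q2 ∈ P := by
        rw [hP, Finset.mem_product, Finset.mem_Icc, Finset.mem_Icc]
        show (1 ≤ p.1 ∧ p.1 ≤ n) ∧ (-(D:ℤ) ≤ -p.2 ∧ -p.2 ≤ (D:ℤ))
        exact ⟨hp'.1, by omega, by omega⟩
      have hne' : p ≠ q2 := by
        intro h
        apply hz
        have := congrArg Prod.snd h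
        simp [hq2] at this
        omega
      have hsub : ({p, q2} : Finset (ℕ × ℤ)) ⊆ P := by
        intro x hx
        rw [Finset.mem_insert, Finset.mem_singleton] at hx
        rcases hx with h | h
        · exact h ▸ hp
        · exact h ▸ hq2P
      have hbound := Finset.sum_le_sum_of_subset_of_nonneg hsub
        (fun q hq _ => hvalnn p hp q hq)
      rw [Finset.sum_pair hne'] at hbound
      refine le_trans ?_ hbound
      have hma : m p ≠ 0 := by
        simp only [hm]
        have := hpos p.1
        intro h
        rcases mul_eq_zero.mp h with h | h
        · exact hz h
        · omega
      have e1 : val p p = (c p.2)^2 / 2 := by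
        rw [hval]
        dsimp only
        rw [if_pos rfl, if_neg (by omega)]
        ring
      have e2 : val p q2 = (c p.2)^2 / 2 := by
        have hmq2 : m (p.1, -p.2) = -(m p) := by
          simp only [hm]
          ring
        rw [hval]
        dsimp only [hq2]
        rw [hmq2, if_neg (by omega), if_pos (by omega), hsym]
        ring
      rw [e1, e2]
      linarith
  have step2 : ∑ p ∈ P, (c p.2)^2 ≤ ∑ p ∈ P, ∑ q ∈ P, val p q :=
    Finset.sum_le_sum key
  refine le_trans (le_of_eq ?_) step2
  -- compute ∑ p ∈ P, c p.2 ^ 2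
  rw [hP, Finset.sum_product]
  have hinner : ∑ d ∈ Finset.Icc (-(D:ℤ)) (D:ℤ), (c d)^2
      = 2 * ∑ d ∈ Finset.Icc (1:ℤ) D, (c d)^2 := by
    have hsplit : Finset.Icc (-(D:ℤ)) (D:ℤ)
        = Finset.Icc (-(D:ℤ)) 0 ∪ Finset.Icc (1:ℤ) D := by
      ext x; simp [Finset.mem_Icc]; omega
    have hdisj : Disjoint (Finset.Icc (-(D:ℤ)) 0) (Finset.Icc (1:ℤ) D) := by
      rw [Finset.disjoint_left]
      intro x hx hx'
      rw [Finset.mem_Icc] at hx hx'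
      omega
    rw [hsplit, Finset.sum_union hdisj]
    have himg : Finset.Icc (-(D:ℤ)) 0 = (Finset.Icc (0:ℤ) D).image (fun d => -d) := by
      ext x
      simp only [Finset.mem_image, Finset.mem_Icc]
      constructor
      · intro h; exact ⟨-x, ⟨by omega, by omega⟩, by omega⟩
      · rintro ⟨y, hy, rfl⟩; omega
    have hrefl : ∑ d ∈ Finset.Icc (-(D:ℤ)) 0, (c d)^2
        = ∑ d ∈ Finset.Icc (0:ℤ) D, (c d)^2 := by
      rw [himg, Finset.sum_image (by intro x _ y _ h; exact neg_inj.mp h)]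
      apply Finset.sum_congr rfl
      intro d _
      rw [hsym]
    have h0D : Finset.Icc (0:ℤ) D = insert 0 (Finset.Icc (1:ℤ) D) := by
      ext x; simp [Finset.mem_Icc]; omega
    rw [hrefl, h0D, Finset.sum_insert (by simp), h0]
    ring
  have hconst : ∑ j ∈ Finset.Icc 1 n, ∑ d ∈ Finset.Icc (-(D:ℤ)) (D:ℤ), (c d)^2
      = ∑ j ∈ Finset.Icc 1 n, (2 * ∑ d ∈ Finset.Icc (1:ℤ) D, (c d)^2) :=
    Finset.sum_congr rfl fun j _ => hinner
  rw [hconst, Finset.sum_const, Nat.card_Icc]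
  have hcard : n + 1 - 1 = n := by omega
  rw [hcard, nsmul_eq_mul]
  ring
end

section
/- Let D ≥ 1, M ∈ ℕ, and let (a_n) be a sequence of positive integers such that a_{n+1}/a_n ∈ {2,3,…} for all n. Set k = ⌈log(MD)/log 2⌉. Suppose V_1, V_2 ⊆ ℕ are nonempty disjoint sets with |v - w| ≥ k+1 for all v ∈ V_1, w ∈ V_2. Then any solution of Σ_{i=1}^r ε_i a_{v_i} + Σ_{j=1}^s η_j a_{w_j} = 0 with v_i ∈ V_1, w_j ∈ V_2, ε_i, η_j ∈ {-D,…,D}, and r + s ≤ M, splits: Σ_{i=1}^r ε_i a_{v_i} = 0 and Σ_{j=1}^s η_j a_{w_j} = 0. -/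
lemma advd (a : ℕ → ℕ) (hdvd : ∀ n, a n ∣ a (n + 1)) :
    ∀ p q : ℕ, p ≤ q → a p ∣ a q := by
  intro p q hpq
  induction q, hpq using Nat.le_induction with
  | base => exact dvd_rfl
  | succ n hn ih => exact ih.trans (hdvd n)

lemma agrow (a : ℕ → ℕ) (hgap : ∀ n, 2 * a n ≤ a (n + 1)) :
    ∀ p t : ℕ, 2 ^ t * a p ≤ a (p + t) := by
  intro p t
  induction t with
  | zero => simp
  | succ t ih =>
      calc 2 ^ (t+1) * a p = 2 * (2 ^ t * a p) := by ring
        _ ≤ 2 * a (p + t) := by omega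
        _ ≤ a (p + t + 1) := hgap _

lemma aux_split (D M : ℕ) (a : ℕ → ℕ) (hpos : ∀ n, 0 < a n)
    (hdvd : ∀ n, a n ∣ a (n + 1)) (hgap : ∀ n, 2 * a n ≤ a (n + 1))
    (k : ℕ) (hMD : M * D ≤ 2 ^ k)
    {ι : Type} [DecidableEq ι] (n : ι → ℕ) (c : ι → ℤ) (col : ι → Bool) :
    ∀ s : Finset ι, s.card ≤ M → (∀ i ∈ s, |c i| ≤ (D : ℤ)) →
    (∀ i ∈ s, ∀ j ∈ s, col i ≠ col j → (k : ℤ) + 1 ≤ |(n i : ℤ) - (n j : ℤ)|) →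
    (∑ i ∈ s, c i * (a (n i) : ℤ)) = 0 →
    ∀ b : Bool, ∑ i ∈ s.filter (fun i => col i = b), c i * (a (n i) : ℤ) = 0 := by
  classical
  intro s
  induction s using Finset.strongInduction with
  | _ s IH =>
    intro hcard hc hsep hsum b
    rcases s.eq_empty_or_nonempty with rfl | ⟨i₁, hi₁⟩
    · simp
    by_cases hmono : ∀ i ∈ s, col i = col i₁
    · -- monochromatic case
      by_cases hb : col i₁ = b
      · have hfe : s.filter (fun i => col i = b) = s :=
          Finset.filter_eq_self.2 (fun i hi => (hmono i hi).trans hb)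
        rw [hfe]; exact hsum
      · have hfe : s.filter (fun i => col i = b) = ∅ :=
          Finset.filter_eq_empty_iff.2 (fun i hi => (hmono i hi) ▸ hb)
        rw [hfe]; simp
    · push_neg at hmono
      obtain ⟨j₁, hj₁, hj₁c⟩ := hmono
      -- minimum over s
      obtain ⟨i₀, hi₀, hmin⟩ := s.exists_min_image n ⟨i₁, hi₁⟩
      set b₀ := col i₀ with hb₀
      -- the set of opposite-colored elements
      have Tne : (s.filter (fun i => col i ≠ b₀)).Nonempty := by
        by_cases h : col i₁ = b₀
        · exact ⟨j₁, Finset.mem_filter.2 ⟨hj₁, by simp [h ▸ hj₁c]⟩⟩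
        · exact ⟨i₁, Finset.mem_filter.2 ⟨hi₁, h⟩⟩
      obtain ⟨j₀, hj₀, hmin'⟩ := (s.filter (fun i => col i ≠ b₀)).exists_min_image n Tne
      obtain ⟨hj₀s, hj₀c⟩ := Finset.mem_filter.1 hj₀
      set m' := n j₀ with hm'
      -- every element of s with n i < m' has color b₀ and n i + (k+1) ≤ m'
      have hlow : ∀ i ∈ s, n i < m' → col i = b₀ ∧ n i + (k + 1) ≤ m' := by
        intro i hi hilt
        have hci : col i = b₀ := by
          by_contra hci
          exact absurd (hmin' i (Finset.mem_filter.2 ⟨hi, hci⟩)) (by omega)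
        refine ⟨hci, ?_⟩
        have hs1 := hsep i hi j₀ hj₀s (by rw [hci]; exact fun h => hj₀c h.symm)
        have habs : |(n i : ℤ) - (n j₀ : ℤ)| = (n j₀ : ℤ) - n i := by
          rw [abs_of_nonpos (by push_cast; omega)]; ring
        rw [habs] at hs1
        omega
      -- n i₀ < m'
      have hi₀lt : n i₀ < m' := by
        have hne : col i₀ ≠ col j₀ := fun h => hj₀c h.symm
        have h1 := hsep i₀ hi₀ j₀ hj₀s hne
        have h2 := hmin j₀ hj₀s
        rcases abs_cases ((n i₀ : ℤ) - (n j₀ : ℤ)) with ⟨he, _⟩ | ⟨he, _⟩ <;>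
          rw [he] at h1 <;> omega
      set L := s.filter (fun i => n i < m') with hL
      set H := s.filter (fun i => ¬ n i < m') with hH
      have hLsub : L ⊆ s := Finset.filter_subset _ _
      have hHsub : H ⊆ s := Finset.filter_subset _ _
      have hi₀L : i₀ ∈ L := Finset.mem_filter.2 ⟨hi₀, hi₀lt⟩
      have hHss : H ⊂ s := by
        refine ⟨hHsub, fun hsub => ?_⟩
        have := Finset.mem_filter.1 (hsub hi₀)
        exact this.2 hi₀lt
      have hsplit : (∑ i ∈ L, c i * (a (n i) : ℤ)) + (∑ i ∈ H, c i * (a (n i) : ℤ))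
          = ∑ i ∈ s, c i * (a (n i) : ℤ) :=
        Finset.sum_filter_add_sum_filter_not s _ _
      -- a m' divides the H-sum
      have hdvdH : (a m' : ℤ) ∣ ∑ i ∈ H, c i * (a (n i) : ℤ) := by
        refine Finset.dvd_sum fun i hi => Dvd.dvd.mul_left ?_ _
        have hge : m' ≤ n i := by
          have := (Finset.mem_filter.1 hi).2; omega
        exact_mod_cast Int.natCast_dvd_natCast.2 (advd a hdvd _ _ hge)
      have hdvdL : (a m' : ℤ) ∣ ∑ i ∈ L, c i * (a (n i) : ℤ) := by
        have : ∑ i ∈ L, c i * (a (n i) : ℤ) = - ∑ i ∈ H, c i * (a (n i) : ℤ) := by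
          omega
        rw [this]; exact hdvdH.neg_right
      -- size bound on the L-sum
      have hkm' : k + 1 ≤ m' := by
        have := (hlow i₀ hi₀ hi₀lt).2; omega
      have hbound : |∑ i ∈ L, c i * (a (n i) : ℤ)| < (a m' : ℤ) := by
        have hterm : ∀ i ∈ L, |c i * (a (n i) : ℤ)| ≤ (D : ℤ) * (a (m' - (k+1)) : ℤ) := by
          intro i hi
          obtain ⟨his, hilt⟩ := Finset.mem_filter.1 hi
          have hle : n i ≤ m' - (k+1) := by
            have := (hlow i his hilt).2; omega
          have hale : a (n i) ≤ a (m' - (k+1)) :=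
            Nat.le_of_dvd (hpos _) (advd a hdvd _ _ hle)
          rw [abs_mul, abs_of_nonneg (by positivity : (0:ℤ) ≤ (a (n i) : ℤ))]
          have h1 := hc i his
          have h2 : (a (n i) : ℤ) ≤ (a (m' - (k+1)) : ℤ) := by exact_mod_cast hale
          exact mul_le_mul h1 h2 (by positivity) (Int.natCast_nonneg _)
        calc |∑ i ∈ L, c i * (a (n i) : ℤ)| ≤ ∑ i ∈ L, |c i * (a (n i) : ℤ)| :=
              Finset.abs_sum_le_sum_abs _ _
          _ ≤ ∑ _i ∈ L, (D : ℤ) * (a (m' - (k+1)) : ℤ) := Finset.sum_le_sum hterm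
          _ = (L.card : ℤ) * ((D : ℤ) * (a (m' - (k+1)) : ℤ)) := by
              rw [Finset.sum_const, nsmul_eq_mul]
          _ ≤ (M : ℤ) * ((D : ℤ) * (a (m' - (k+1)) : ℤ)) := by
              have h1 : L.card ≤ M := le_trans (Finset.card_le_card hLsub) hcard
              have h1' : (L.card : ℤ) ≤ (M : ℤ) := by exact_mod_cast h1
              exact mul_le_mul_of_nonneg_right h1' (by positivity)
          _ < (a m' : ℤ) := by
              have hg := agrow a hgap (m' - (k+1)) (k+1)
              rw [Nat.sub_add_cancel hkm'] at hg
              have hMD' : (M : ℤ) * (D : ℤ) ≤ 2 ^ k := by exact_mod_cast hMD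
              have hpos' : (0:ℤ) < (a (m' - (k+1)) : ℤ) := by exact_mod_cast hpos _
              have hg' : (2:ℤ) ^ (k+1) * (a (m' - (k+1)) : ℤ) ≤ (a m' : ℤ) := by
                exact_mod_cast hg
              calc (M : ℤ) * ((D : ℤ) * (a (m' - (k+1)) : ℤ))
                  = ((M : ℤ) * (D : ℤ)) * (a (m' - (k+1)) : ℤ) := by ring
                _ ≤ (2:ℤ) ^ k * (a (m' - (k+1)) : ℤ) :=
                    mul_le_mul_of_nonneg_right hMD' hpos'.le
                _ < (2:ℤ) ^ (k+1) * (a (m' - (k+1)) : ℤ) := by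
                    have h2k : (2:ℤ) ^ k < (2:ℤ) ^ (k+1) := by
                      have := pow_pos (by norm_num : (0:ℤ) < 2) k
                      calc (2:ℤ)^k < 2 * 2^k := by linarith
                        _ = 2^(k+1) := by ring
                    exact mul_lt_mul_of_pos_right h2k hpos'
                _ ≤ (a m' : ℤ) := hg'
      have hL0 : ∑ i ∈ L, c i * (a (n i) : ℤ) = 0 :=
        Int.eq_zero_of_abs_lt_dvd hdvdL hbound
      have hH0 : ∑ i ∈ H, c i * (a (n i) : ℤ) = 0 := by omega
      -- apply the induction hypothesis to H
      have hIH := IH H hHss (le_trans (Finset.card_le_card hHsub) hcard)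
        (fun i hi => hc i (hHsub hi))
        (fun i hi j hj => hsep i (hHsub hi) j (hHsub hj)) hH0 b
      -- combine
      have key : ∑ i ∈ s.filter (fun i => col i = b), c i * (a (n i) : ℤ)
          = (∑ i ∈ L.filter (fun i => col i = b), c i * (a (n i) : ℤ))
            + ∑ i ∈ H.filter (fun i => col i = b), c i * (a (n i) : ℤ) := by
        have e1 : L.filter (fun i => col i = b)
            = (s.filter (fun i => col i = b)).filter (fun i => n i < m') := by
          rw [hL]; ext i; simp only [Finset.mem_filter]; tauto
        have e2 : H.filter (fun i => col i = b)
            = (s.filter (fun i => col i = b)).filter (fun i => ¬ n i < m') := by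
          rw [hH]; ext i; simp only [Finset.mem_filter]; tauto
        rw [e1, e2]
        exact (Finset.sum_filter_add_sum_filter_not (s.filter (fun i => col i = b))
          (fun i => n i < m') (fun i => c i * (a (n i) : ℤ))).symm
      rw [key, hIH, add_zero]
      by_cases hbb : b = b₀
      · have : L.filter (fun i => col i = b) = L := by
          refine Finset.filter_eq_self.2 fun i hi => ?_
          obtain ⟨his, hilt⟩ := Finset.mem_filter.1 hi
          rw [hbb]; exact (hlow i his hilt).1
        rw [this]; exact hL0
      · have : L.filter (fun i => col i = b) = ∅ := by
          refine Finset.filter_eq_empty_iff.2 fun i hi => ?_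
          obtain ⟨his, hilt⟩ := Finset.mem_filter.1 hi
          rw [(hlow i his hilt).1]
          exact fun h => hbb h.symm
        rw [this]; simp

/-- Splitting of solutions to the Diophantine equation for lacunary sequences with integer
ratios: setting `k = ⌈log (M D) / log 2⌉`, if the index sets `V₁` and `V₂` are at distance
at least `k + 1` from each other, then every solution of
`∑ ε_i a_{v_i} + ∑ η_j a_{w_j} = 0` with at most `M` terms and coefficients bounded by `D`
splits into two solutions `∑ ε_i a_{v_i} = 0` and `∑ η_j a_{w_j} = 0`. -/
theorem stmt7 (D M : ℕ) (hD : 1 ≤ D) (hM : 1 ≤ M)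
    (a : ℕ → ℕ) (hpos : ∀ n, 0 < a n)
    (hdvd : ∀ n, a n ∣ a (n + 1)) (hgap : ∀ n, 2 * a n ≤ a (n + 1))
    (k : ℕ) (hk : k = ⌈Real.log (M * D) / Real.log 2⌉₊)
    (V₁ V₂ : Set ℕ) (h1 : V₁.Nonempty) (h2 : V₂.Nonempty) (hdisj : Disjoint V₁ V₂)
    (hsep : ∀ v ∈ V₁, ∀ w ∈ V₂, (k : ℤ) + 1 ≤ |(v : ℤ) - (w : ℤ)|)
    (r s : ℕ) (hr : 1 ≤ r) (hs : 1 ≤ s) (hrs : r + s ≤ M)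
    (v : Fin r → ℕ) (hv : ∀ i, v i ∈ V₁) (w : Fin s → ℕ) (hw : ∀ j, w j ∈ V₂)
    (ε : Fin r → ℤ) (hε : ∀ i, |ε i| ≤ D) (η : Fin s → ℤ) (hη : ∀ j, |η j| ≤ D)
    (hsum : ∑ i, ε i * a (v i) + ∑ j, η j * a (w j) = 0) :
    ∑ i, ε i * a (v i) = 0 ∧ ∑ j, η j * a (w j) = 0 := by
  classical
  -- M * D ≤ 2 ^ k
  have hMD : M * D ≤ 2 ^ k := by
    have h1' : (1 : ℝ) ≤ (M * D : ℕ) := by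
      have : 1 ≤ M * D := Nat.one_le_iff_ne_zero.2 (by positivity)
      exact_mod_cast this
    have hlog2 : (0:ℝ) < Real.log 2 := Real.log_pos (by norm_num)
    have hceil : Real.log ((M:ℝ) * (D:ℝ)) / Real.log 2 ≤ (k : ℝ) := by
      rw [hk]; push_cast
      exact Nat.le_ceil _
    have : Real.log ((M:ℝ) * (D:ℝ)) ≤ (k : ℝ) * Real.log 2 := by
      rw [div_le_iff₀ hlog2] at hceil; linarith
    have h2k : ((M * D : ℕ) : ℝ) ≤ (2 : ℝ) ^ k := by
      have := Real.exp_le_exp.2 this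
      rw [Real.exp_log (by push_cast at h1' ⊢; linarith)] at this
      calc ((M * D : ℕ) : ℝ) = (M:ℝ) * (D:ℝ) := by push_cast; ring
        _ ≤ Real.exp ((k : ℝ) * Real.log 2) := this
        _ = (2:ℝ) ^ k := by
            rw [← Real.rpow_natCast 2 k, Real.rpow_def_of_pos (by norm_num)]
            ring_nf
    exact_mod_cast h2k
  -- set up the combined index type
  set ι := Fin r ⊕ Fin s
  let n : ι → ℕ := Sum.elim v w
  let c : ι → ℤ := Sum.elim ε η
  let col : ι → Bool := Sum.elim (fun _ => true) (fun _ => false)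
  have hcard : (Finset.univ : Finset ι).card ≤ M := by
    simp [ι, Finset.card_univ]; omega
  have hc : ∀ i ∈ (Finset.univ : Finset ι), |c i| ≤ (D : ℤ) := by
    rintro (i | j) _
    · exact hε i
    · exact hη j
  have hsep' : ∀ i ∈ (Finset.univ : Finset ι), ∀ j ∈ (Finset.univ : Finset ι),
      col i ≠ col j → (k : ℤ) + 1 ≤ |(n i : ℤ) - (n j : ℤ)| := by
    rintro (i | i) _ (j | j) _ hne
    · simp [col] at hne
    · exact hsep (v i) (hv i) (w j) (hw j)
    · rw [abs_sub_comm]; exact hsep (v j) (hv j) (w i) (hw i)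
    · simp [col] at hne
  have hsum' : ∑ i ∈ (Finset.univ : Finset ι), c i * (a (n i) : ℤ) = 0 := by
    rw [Fintype.sum_sum_type]
    simpa [n, c] using hsum
  have h := aux_split D M a hpos hdvd hgap k hMD n c col Finset.univ hcard hc hsep' hsum'
  have ht := h true
  have hf := h false
  rw [Finset.sum_filter, Fintype.sum_sum_type] at ht hf
  simp only [n, c, col, Sum.elim_inl, Sum.elim_inr, if_true, if_pos rfl] at ht hf
  constructor
  · simpa using ht
  · simpa using hf
end

section
/- Let f be a real, even, centered trigonometric polynomial of degree D, let (a_n) be a sequence of positive integers with a_{n+1}/a_n ∈ {2,3,…} for all n, and set X_n = f(a_n U) with U ~ Unif(0,1). Fix M ∈ ℕ and k = ⌈log(MD)/log 2⌉. Then the graph G on vertex set ℕ with i ∼ j iff |i - j| ≤ k is a correlation graph of range M for (X_n): whenever V_1, V_2 are disjoint nonempty subsets of ℕ with no edges between them, and r + s ≤ M with v_i ∈ V_1, w_j ∈ V_2, then E[Π_{i=1}^r X_{v_i} Π_{j=1}^s X_{w_j}] = E[Π_{i=1}^r X_{v_i}]·E[Π_{j=1}^s X_{w_j}]. -/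
open Real

section CorrAux

private lemma aux_mono (a : ℕ → ℕ) (hpos : ∀ n, 0 < a n) (hgap : ∀ n, 2 * a n ≤ a (n + 1)) :
    Monotone a :=
  monotone_nat_of_le_succ fun n => by have := hgap n; have := hpos n; omega

private lemma aux_dvd (a : ℕ → ℕ) (hdvd : ∀ n, a n ∣ a (n + 1)) {m n : ℕ} (h : m ≤ n) :
    a m ∣ a n := by
  induction n, h using Nat.le_induction with
  | base => exact dvd_rfl
  | succ n hmn ih => exact ih.trans (hdvd n)

private lemma aux_growth (a : ℕ → ℕ) (hgap : ∀ n, 2 * a n ≤ a (n + 1)) (t j : ℕ) :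
    2 ^ j * a t ≤ a (t + j) := by
  induction j with
  | zero => simp
  | succ j ih =>
    have h1 : 2 ^ (j+1) * a t = 2 * (2 ^ j * a t) := by ring
    have h2 := hgap (t + j)
    calc 2 ^ (j+1) * a t = 2 * (2 ^ j * a t) := h1
      _ ≤ 2 * a (t + j) := by omega
      _ ≤ a (t + j + 1) := h2

private lemma key_lemma {ι : Type*} [DecidableEq ι] (a : ℕ → ℕ)
    (hpos : ∀ n, 0 < a n) (hdvd : ∀ n, a n ∣ a (n + 1)) (hgap : ∀ n, 2 * a n ≤ a (n + 1))
    (k : ℕ) :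
    ∀ (N : ℕ) (I : Finset ι), I.card ≤ N → ∀ (node : ι → ℕ) (coef : ι → ℤ) (P : Finset ι),
      P ⊆ I →
      (∀ p ∈ P, ∀ q ∈ I, q ∉ P → (k : ℤ) + 1 ≤ |(node p : ℤ) - (node q : ℤ)|) →
      (∑ i ∈ I, |coef i| ≤ 2 ^ k) →
      (∑ i ∈ I, coef i * (a (node i) : ℤ)) = 0 →
      (∑ i ∈ P, coef i * (a (node i) : ℤ)) = 0 := by
  intro N
  induction N with
  | zero =>
    intro I hI node coef P hPI _ _ _
    have hIe : I = ∅ := Finset.card_eq_zero.mp (Nat.le_antisymm hI (Nat.zero_le _))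
    have : P = ∅ := Finset.subset_empty.mp (hIe ▸ hPI)
    simp [this]
  | succ N ih =>
    intro I hI node coef P hPI hsep hbound hzero
    rcases P.eq_empty_or_nonempty with rfl | hPne
    · simp
    by_cases hPI' : I ⊆ P
    · rw [Finset.Subset.antisymm hPI hPI']
      exact hzero
    have hIne : I.Nonempty := hPne.mono hPI
    obtain ⟨i₀, hi₀I, hmax⟩ := I.exists_max_image node hIne
    obtain ⟨t, ht, hi₀t, hside⟩ :
        ∃ t : ℕ, (∀ i ∈ I, node i ≤ t ∨ t + k + 1 ≤ node i) ∧ t < node i₀ ∧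
          (∀ i ∈ I, t < node i → (i ∈ P ↔ i₀ ∈ P)) := by
      by_cases hiP : i₀ ∈ P
      · obtain ⟨x, hxI, hxP⟩ := Finset.not_subset.mp hPI'
        obtain ⟨q₀, hq₀, hqmax⟩ := (I \ P).exists_max_image node ⟨x, Finset.mem_sdiff.mpr ⟨hxI, hxP⟩⟩
        rw [Finset.mem_sdiff] at hq₀
        refine ⟨node q₀, ?_, ?_, ?_⟩
        · intro i hi
          by_cases hiP2 : i ∈ P
          · have h := hsep i hiP2 q₀ hq₀.1 hq₀.2
            rcases le_abs.mp h with h' | h'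
            · right; omega
            · left; omega
          · exact Or.inl (hqmax i (Finset.mem_sdiff.mpr ⟨hi, hiP2⟩))
        · have h := hsep i₀ hiP q₀ hq₀.1 hq₀.2
          have h2 := hmax q₀ hq₀.1
          rcases le_abs.mp h with h' | h' <;> omega
        · intro i hi hti
          refine iff_of_true ?_ hiP
          by_contra hiP2
          exact absurd (hqmax i (Finset.mem_sdiff.mpr ⟨hi, hiP2⟩)) (by omega)
      · obtain ⟨p₀, hp₀, hpmax⟩ := P.exists_max_image node hPne
        refine ⟨node p₀, ?_, ?_, ?_⟩
        · intro i hi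
          by_cases hiP2 : i ∈ P
          · exact Or.inl (hpmax i hiP2)
          · have h := hsep p₀ hp₀ i hi hiP2
            rcases le_abs.mp h with h' | h'
            · left; omega
            · right; omega
        · have h := hsep p₀ hp₀ i₀ hi₀I hiP
          have h2 := hmax p₀ (hPI hp₀)
          rcases le_abs.mp h with h' | h' <;> omega
        · intro i hi hti
          refine iff_of_false ?_ hiP
          intro hiP2
          exact absurd (hpmax i hiP2) (by omega)
    have hsplit := Finset.sum_filter_add_sum_filter_not I (fun i => node i ≤ t)
      (fun i => coef i * (a (node i) : ℤ))
    rw [hzero] at hsplit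
    have hdvd2 : (a (t + k + 1) : ℤ) ∣
        ∑ i ∈ I.filter (fun i => ¬ node i ≤ t), coef i * (a (node i) : ℤ) := by
      refine Finset.dvd_sum fun i hi => Dvd.dvd.mul_left ?_ _
      obtain ⟨hiI, hit⟩ := Finset.mem_filter.mp hi
      have h1 : t + k + 1 ≤ node i := (ht i hiI).resolve_left hit
      exact_mod_cast aux_dvd a hdvd h1
    have habs : |∑ i ∈ I.filter (fun i => node i ≤ t), coef i * (a (node i) : ℤ)|
        < (a (t + k + 1) : ℤ) := by
      have hmono := aux_mono a hpos hgap
      calc |∑ i ∈ I.filter (fun i => node i ≤ t), coef i * (a (node i) : ℤ)|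
          ≤ ∑ i ∈ I.filter (fun i => node i ≤ t), |coef i * (a (node i) : ℤ)| :=
            Finset.abs_sum_le_sum_abs _ _
        _ = ∑ i ∈ I.filter (fun i => node i ≤ t), |coef i| * (a (node i) : ℤ) :=
            Finset.sum_congr rfl fun i _ => by
              rw [abs_mul, abs_of_nonneg (by positivity : (0:ℤ) ≤ (a (node i) : ℤ))]
        _ ≤ ∑ i ∈ I.filter (fun i => node i ≤ t), |coef i| * (a t : ℤ) := by
            refine Finset.sum_le_sum fun i hi => ?_
            have := (Finset.mem_filter.mp hi).2
            exact mul_le_mul_of_nonneg_left (by exact_mod_cast hmono this) (abs_nonneg _)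
        _ = (∑ i ∈ I.filter (fun i => node i ≤ t), |coef i|) * (a t : ℤ) :=
            (Finset.sum_mul _ _ _).symm
        _ ≤ (2 ^ k : ℤ) * (a t : ℤ) := by
            refine mul_le_mul_of_nonneg_right ?_ (by positivity)
            calc ∑ i ∈ I.filter (fun i => node i ≤ t), |coef i|
                ≤ ∑ i ∈ I, |coef i| := Finset.sum_le_sum_of_subset_of_nonneg
                  (Finset.filter_subset _ _) (fun i _ _ => abs_nonneg _)
              _ ≤ 2 ^ k := hbound
        _ ≤ (a (t + k) : ℤ) := by exact_mod_cast aux_growth a hgap t k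
        _ < (a (t + k + 1) : ℤ) := by
            have := hgap (t + k); have := hpos (t + k); exact_mod_cast by omega
    have hhi0 : ∑ i ∈ I.filter (fun i => ¬ node i ≤ t), coef i * (a (node i) : ℤ) = 0 := by
      refine Int.eq_zero_of_abs_lt_dvd hdvd2 ?_
      have heq2 : ∑ i ∈ I.filter (fun i => ¬ node i ≤ t), coef i * (a (node i) : ℤ)
          = -∑ i ∈ I.filter (fun i => node i ≤ t), coef i * (a (node i) : ℤ) := by linarith
      rw [heq2, abs_neg]; exact habs
    have hlo0 : ∑ i ∈ I.filter (fun i => node i ≤ t), coef i * (a (node i) : ℤ) = 0 := by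
      linarith
    have hi₀lo : i₀ ∉ I.filter (fun i => node i ≤ t) := by
      simp only [Finset.mem_filter]; push_neg; intro _; omega
    have hcard : (I.filter (fun i => node i ≤ t)).card ≤ N := by
      have hss : I.filter (fun i => node i ≤ t) ⊂ I :=
        (Finset.ssubset_iff_of_subset (Finset.filter_subset _ _)).mpr ⟨i₀, hi₀I, hi₀lo⟩
      have := Finset.card_lt_card hss
      omega
    have hP1 : ∑ i ∈ P.filter (fun i => node i ≤ t), coef i * (a (node i) : ℤ) = 0 := by
      refine ih (I.filter (fun i => node i ≤ t)) hcard node coef _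
        (Finset.filter_subset_filter _ hPI) ?_ ?_ hlo0
      · intro p hp q hq hqP
        obtain ⟨hpP, _⟩ := Finset.mem_filter.mp hp
        obtain ⟨hqI, hqt⟩ := Finset.mem_filter.mp hq
        refine hsep p hpP q hqI fun hqP2 => hqP (Finset.mem_filter.mpr ⟨hqP2, hqt⟩)
      · exact le_trans (Finset.sum_le_sum_of_subset_of_nonneg (Finset.filter_subset _ _)
          (fun i _ _ => abs_nonneg _)) hbound
    have hP2 : ∑ i ∈ P.filter (fun i => ¬ node i ≤ t), coef i * (a (node i) : ℤ) = 0 := by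
      by_cases hiP : i₀ ∈ P
      · have heq : P.filter (fun i => ¬ node i ≤ t) = I.filter (fun i => ¬ node i ≤ t) := by
          ext i
          simp only [Finset.mem_filter]
          constructor
          · rintro ⟨hiP', h⟩; exact ⟨hPI hiP', h⟩
          · rintro ⟨hiI, h⟩; exact ⟨(hside i hiI (by omega)).mpr hiP, h⟩
        rw [heq]; exact hhi0
      · have heq : P.filter (fun i => ¬ node i ≤ t) = ∅ := by
          rw [Finset.eq_empty_iff_forall_notMem]
          intro i hi
          obtain ⟨hiP', h⟩ := Finset.mem_filter.mp hi
          exact hiP ((hside i (hPI hiP') (by omega)).mp hiP')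
        rw [heq]; simp
    calc ∑ i ∈ P, coef i * (a (node i) : ℤ)
        = (∑ i ∈ P.filter (fun i => node i ≤ t), coef i * (a (node i) : ℤ))
          + ∑ i ∈ P.filter (fun i => ¬ node i ≤ t), coef i * (a (node i) : ℤ) :=
          (Finset.sum_filter_add_sum_filter_not P _ _).symm
    _ = 0 := by rw [hP1, hP2, add_zero]

private lemma freq_split (a : ℕ → ℕ)
    (hpos : ∀ n, 0 < a n) (hdvd : ∀ n, a n ∣ a (n + 1)) (hgap : ∀ n, 2 * a n ≤ a (n + 1))
    (k D M : ℕ) (hMD : (M : ℤ) * D ≤ 2 ^ k)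
    (r s : ℕ) (hrs : r + s ≤ M)
    (v : Fin r → ℕ) (w : Fin s → ℕ)
    (hsep : ∀ i j, (k : ℤ) + 1 ≤ |(v i : ℤ) - (w j : ℤ)|)
    (p : Fin r → ℤ) (q : Fin s → ℤ)
    (hp : ∀ i, |p i| ≤ (D : ℤ)) (hq : ∀ j, |q j| ≤ (D : ℤ))
    (h : (∑ i, p i * (a (v i) : ℤ)) + (∑ j, q j * (a (w j) : ℤ)) = 0) :
    (∑ i, p i * (a (v i) : ℤ)) = 0 := by
  classical
  have happ := key_lemma a hpos hdvd hgap k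
    (Finset.univ : Finset (Fin r ⊕ Fin s)).card Finset.univ le_rfl
    (Sum.elim v w) (Sum.elim p q) (Finset.univ.image Sum.inl) (Finset.subset_univ _)
    ?_ ?_ ?_
  · rw [Finset.sum_image (by intro x _ y _ hxy; exact Sum.inl_injective hxy)] at happ
    simpa using happ
  · intro pp hpp qq _ hqq
    obtain ⟨i, _, rfl⟩ := Finset.mem_image.mp hpp
    cases qq with
    | inl i' => exact absurd (Finset.mem_image.mpr ⟨i', Finset.mem_univ _, rfl⟩) hqq
    | inr j => simpa using hsep i j
  · have hD0 : (0:ℤ) ≤ (D:ℤ) := Int.natCast_nonneg D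
    have hrsM : ((r:ℤ) + s) ≤ (M:ℤ) := by exact_mod_cast hrs
    calc ∑ x : Fin r ⊕ Fin s, |Sum.elim p q x|
        = (∑ i, |p i|) + ∑ j, |q j| := by rw [Fintype.sum_sum_type]; simp
      _ ≤ (∑ _i : Fin r, (D:ℤ)) + ∑ _j : Fin s, (D:ℤ) :=
          add_le_add (Finset.sum_le_sum fun i _ => hp i) (Finset.sum_le_sum fun j _ => hq j)
      _ = (r : ℤ) * D + (s : ℤ) * D := by
          simp [Finset.sum_const, Finset.card_univ, mul_comm]
      _ ≤ (M : ℤ) * D := by nlinarith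
      _ ≤ 2 ^ k := hMD
  · rw [Fintype.sum_sum_type]; simpa using h

private noncomputable def Eexp (n : ℤ) (x : ℝ) : ℂ :=
  Complex.exp (2 * Real.pi * Complex.I * n * x)

private lemma Eexp_zero (x : ℝ) : Eexp 0 x = 1 := by simp [Eexp]

private lemma Eexp_add (m n : ℤ) (x : ℝ) : Eexp (m + n) x = Eexp m x * Eexp n x := by
  rw [Eexp, Eexp, Eexp, ← Complex.exp_add]
  push_cast
  ring_nf

private lemma Eexp_sum {ι : Type*} (s : Finset ι) (g : ι → ℤ) (x : ℝ) :
    Eexp (∑ i ∈ s, g i) x = ∏ i ∈ s, Eexp (g i) x := by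
  classical
  induction s using Finset.induction with
  | empty => simp [Eexp_zero]
  | insert _ _ h ih => rw [Finset.sum_insert h, Finset.prod_insert h, Eexp_add, ih]

private lemma Eexp_cos_sin (n : ℤ) (x : ℝ) :
    Eexp n x = (Real.cos (2 * π * n * x) : ℝ) + (Real.sin (2 * π * n * x) : ℝ) * Complex.I := by
  rw [Eexp, show (2 * (Real.pi:ℂ) * Complex.I * (n:ℂ) * (x:ℂ))
      = ((2 * π * n * x : ℝ) : ℂ) * Complex.I by push_cast; ring,
    Complex.exp_mul_I, ← Complex.ofReal_cos, ← Complex.ofReal_sin]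

private lemma Eexp_continuous (n : ℤ) : Continuous (Eexp n) :=
  ((continuous_const.mul Complex.continuous_ofReal)).cexp

private lemma Eexp_integral (n : ℤ) :
    ∫ x in (0:ℝ)..1, Eexp n x = if n = 0 then 1 else 0 := by
  by_cases h : n = 0
  · simp [h, Eexp]
  · rw [if_neg h]
    have hc : (2 * (Real.pi : ℂ) * Complex.I * n) ≠ 0 := by
      apply mul_ne_zero
      apply mul_ne_zero
      apply mul_ne_zero
      · norm_num
      · exact_mod_cast Complex.ofReal_ne_zero.mpr Real.pi_ne_zero
      · exact Complex.I_ne_zero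
      · exact_mod_cast h
    have heq : ∀ x : ℝ, Eexp n x = Complex.exp ((2 * (Real.pi:ℂ) * Complex.I * n) * x) :=
      fun x => by rw [Eexp]
    rw [intervalIntegral.integral_congr (fun x _ => heq x), integral_exp_mul_complex hc]
    have h1 : Complex.exp ((2 * (Real.pi:ℂ) * Complex.I * n) * ((1:ℝ):ℂ)) = 1 := by
      rw [show ((2 * (Real.pi:ℂ) * Complex.I * n) * ((1:ℝ):ℂ))
          = (n:ℂ) * (2 * (Real.pi:ℂ) * Complex.I) by push_cast; ring]
      exact Complex.exp_int_mul_two_pi_mul_I n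
    have h0 : Complex.exp ((2 * (Real.pi:ℂ) * Complex.I * n) * ((0:ℝ):ℂ)) = 1 := by
      norm_num
    rw [h1, h0]
    simp

private lemma Eexp_integral_sum {κ : Type*} (T : Finset κ) (C : κ → ℂ) (F : κ → ℤ) :
    ∫ x in (0:ℝ)..1, ∑ p ∈ T, C p * Eexp (F p) x
      = ∑ p ∈ T, C p * (if F p = 0 then 1 else 0) := by
  rw [intervalIntegral.integral_finset_sum
    (fun p _ => (show Continuous (fun x => C p * Eexp (F p) x) from
      continuous_const.mul (Eexp_continuous (F p))).intervalIntegrable _ _)]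
  exact Finset.sum_congr rfl fun p _ => by
    rw [intervalIntegral.integral_const_mul, Eexp_integral]

end CorrAux

open Real in
/-- The graph on `ℕ` with `i ∼ j` iff `|i - j| ≤ k`, `k = ⌈log (M D) / log 2⌉`, is a
correlation graph of range `M` for `X_n = f (a_n U)`: mixed moments of variables indexed by
two subsets with no edges between them factorize, as long as at most `M` factors appear. -/
theorem stmt8 (D M : ℕ) (hD : 1 ≤ D) (hM : 1 ≤ M)
    (c : ℤ → ℝ) (hsym : ∀ d, c (-d) = c d) (h0 : c 0 = 0)
    (f : ℝ → ℝ)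
    (hf : ∀ x, f x = ∑ d ∈ Finset.Icc (-(D:ℤ)) D, c d * Real.cos (2 * π * d * x))
    (a : ℕ → ℕ) (hpos : ∀ n, 0 < a n)
    (hdvd : ∀ n, a n ∣ a (n + 1)) (hgap : ∀ n, 2 * a n ≤ a (n + 1))
    (k : ℕ) (hk : k = ⌈Real.log (M * D) / Real.log 2⌉₊)
    (V₁ V₂ : Set ℕ) (h1 : V₁.Nonempty) (h2 : V₂.Nonempty) (hdisj : Disjoint V₁ V₂)
    (hsep : ∀ v ∈ V₁, ∀ w ∈ V₂, (k : ℤ) + 1 ≤ |(v : ℤ) - (w : ℤ)|)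
    (r s : ℕ) (hr : 1 ≤ r) (hs : 1 ≤ s) (hrs : r + s ≤ M)
    (v : Fin r → ℕ) (hv : ∀ i, v i ∈ V₁) (w : Fin s → ℕ) (hw : ∀ j, w j ∈ V₂) :
    ∫ x in (0:ℝ)..1, (∏ i, f (a (v i) * x)) * (∏ j, f (a (w j) * x))
      = (∫ x in (0:ℝ)..1, ∏ i, f (a (v i) * x)) * (∫ x in (0:ℝ)..1, ∏ j, f (a (w j) * x)) := by
  classical
  -- `2 ^ k` dominates `M * D`
  have hMD : (M : ℤ) * D ≤ 2 ^ k := by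
    have hx : (0:ℝ) < (M:ℝ) * D := by
      have hm : (1:ℝ) ≤ (M:ℝ) := by exact_mod_cast hM
      have hd : (1:ℝ) ≤ (D:ℝ) := by exact_mod_cast hD
      nlinarith
    have h1' : (M:ℝ) * D = 2 ^ Real.logb 2 ((M:ℝ)*D) :=
      (Real.rpow_logb (by norm_num) (by norm_num) hx).symm
    have h2' : Real.logb 2 ((M:ℝ)*D) ≤ (k:ℝ) := by
      rw [hk, ← Real.log_div_log]
      exact Nat.le_ceil _
    have h3 : (M:ℝ)*D ≤ (2:ℝ) ^ (k:ℝ) := by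
      rw [h1']
      exact Real.rpow_le_rpow_of_exponent_le (by norm_num) h2'
    rw [Real.rpow_natCast] at h3
    exact_mod_cast h3
  -- complex-exponential expansion of `f (m x)`
  have hfc : ∀ (m : ℕ) (x : ℝ), ((f ((m:ℝ) * x) : ℝ) : ℂ)
      = ∑ d ∈ Finset.Icc (-(D:ℤ)) D, (c d : ℂ) * Eexp (d * m) x := by
    intro m x
    have hsin : ∑ d ∈ Finset.Icc (-(D:ℤ)) D, c d * Real.sin (2*π*(d:ℝ)*((m:ℝ)*x)) = 0 := by
      apply Finset.sum_involution (fun d _ => -d)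
      · intro d _
        have h1' : 2*π*((-d : ℤ):ℝ)*((m:ℝ)*x) = -(2*π*(d:ℝ)*((m:ℝ)*x)) := by push_cast; ring
        rw [hsym, h1', Real.sin_neg]; ring
      · intro d _ hne heq
        apply hne
        have hd0 : d = 0 := by omega
        simp [hd0, h0]
      · intro d _; simp
      · intro d hd; simp only [Finset.mem_Icc] at hd ⊢; omega
    have expand : ∑ d ∈ Finset.Icc (-(D:ℤ)) D, (c d : ℂ) * Eexp (d * m) x
        = ((∑ d ∈ Finset.Icc (-(D:ℤ)) D, c d * Real.cos (2*π*(d:ℝ)*((m:ℝ)*x)) : ℝ) : ℂ)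
          + ((∑ d ∈ Finset.Icc (-(D:ℤ)) D, c d * Real.sin (2*π*(d:ℝ)*((m:ℝ)*x)) : ℝ) : ℂ)
            * Complex.I := by
      rw [Complex.ofReal_sum, Complex.ofReal_sum, Finset.sum_mul, ← Finset.sum_add_distrib]
      refine Finset.sum_congr rfl fun d _ => ?_
      rw [Eexp_cos_sin]
      have harg : 2*π*((d * (m:ℤ) : ℤ):ℝ)*x = 2*π*(d:ℝ)*((m:ℝ)*x) := by push_cast; ring
      rw [harg]
      push_cast
      ring
    rw [expand, hsin, hf]
    push_cast
    ring
  -- expansions of the two products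
  have hprod1 : ∀ x : ℝ, ((∏ i, f ((a (v i) : ℝ) * x) : ℝ) : ℂ)
      = ∑ p ∈ Fintype.piFinset (fun _ : Fin r => Finset.Icc (-(D:ℤ)) D),
          (∏ i, (c (p i) : ℂ)) * Eexp (∑ i, p i * (a (v i) : ℤ)) x := by
    intro x
    rw [Complex.ofReal_prod, Finset.prod_congr rfl (fun i _ => hfc (a (v i)) x),
      Finset.prod_univ_sum]
    refine Finset.sum_congr rfl fun p _ => ?_
    rw [Finset.prod_mul_distrib, Eexp_sum]
  have hprod2 : ∀ x : ℝ, ((∏ j, f ((a (w j) : ℝ) * x) : ℝ) : ℂ)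
      = ∑ q ∈ Fintype.piFinset (fun _ : Fin s => Finset.Icc (-(D:ℤ)) D),
          (∏ j, (c (q j) : ℂ)) * Eexp (∑ j, q j * (a (w j) : ℤ)) x := by
    intro x
    rw [Complex.ofReal_prod, Finset.prod_congr rfl (fun j _ => hfc (a (w j)) x),
      Finset.prod_univ_sum]
    refine Finset.sum_congr rfl fun q _ => ?_
    rw [Finset.prod_mul_distrib, Eexp_sum]
  have hprod12 : ∀ x : ℝ, (((∏ i, f ((a (v i) : ℝ) * x)) * ∏ j, f ((a (w j) : ℝ) * x) : ℝ) : ℂ)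
      = ∑ pq ∈ (Fintype.piFinset (fun _ : Fin r => Finset.Icc (-(D:ℤ)) D)) ×ˢ
            (Fintype.piFinset (fun _ : Fin s => Finset.Icc (-(D:ℤ)) D)),
          ((∏ i, (c (pq.1 i) : ℂ)) * ∏ j, (c (pq.2 j) : ℂ))
            * Eexp ((∑ i, pq.1 i * (a (v i) : ℤ)) + ∑ j, pq.2 j * (a (w j) : ℤ)) x := by
    intro x
    rw [Complex.ofReal_mul, hprod1 x, hprod2 x, Finset.sum_mul_sum, ← Finset.sum_product']
    refine Finset.sum_congr rfl fun pq _ => ?_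
    rw [Eexp_add]
    ring
  -- the three integrals
  have hI1 : ((∫ x in (0:ℝ)..1, ∏ i, f ((a (v i) : ℝ) * x) : ℝ) : ℂ)
      = ∑ p ∈ Fintype.piFinset (fun _ : Fin r => Finset.Icc (-(D:ℤ)) D),
          (∏ i, (c (p i) : ℂ)) * (if (∑ i, p i * (a (v i) : ℤ)) = 0 then 1 else 0) := by
    rw [← intervalIntegral.integral_ofReal,
      intervalIntegral.integral_congr (g := fun x =>
        ∑ p ∈ Fintype.piFinset (fun _ : Fin r => Finset.Icc (-(D:ℤ)) D),
          (∏ i, (c (p i) : ℂ)) * Eexp (∑ i, p i * (a (v i) : ℤ)) x) (fun x _ => hprod1 x),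
      Eexp_integral_sum]
  have hI2 : ((∫ x in (0:ℝ)..1, ∏ j, f ((a (w j) : ℝ) * x) : ℝ) : ℂ)
      = ∑ q ∈ Fintype.piFinset (fun _ : Fin s => Finset.Icc (-(D:ℤ)) D),
          (∏ j, (c (q j) : ℂ)) * (if (∑ j, q j * (a (w j) : ℤ)) = 0 then 1 else 0) := by
    rw [← intervalIntegral.integral_ofReal,
      intervalIntegral.integral_congr (g := fun x =>
        ∑ q ∈ Fintype.piFinset (fun _ : Fin s => Finset.Icc (-(D:ℤ)) D),
          (∏ j, (c (q j) : ℂ)) * Eexp (∑ j, q j * (a (w j) : ℤ)) x) (fun x _ => hprod2 x),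
      Eexp_integral_sum]
  have hI12 : ((∫ x in (0:ℝ)..1, (∏ i, f ((a (v i) : ℝ) * x)) * ∏ j, f ((a (w j) : ℝ) * x) : ℝ) : ℂ)
      = ∑ pq ∈ (Fintype.piFinset (fun _ : Fin r => Finset.Icc (-(D:ℤ)) D)) ×ˢ
            (Fintype.piFinset (fun _ : Fin s => Finset.Icc (-(D:ℤ)) D)),
          ((∏ i, (c (pq.1 i) : ℂ)) * ∏ j, (c (pq.2 j) : ℂ))
            * (if ((∑ i, pq.1 i * (a (v i) : ℤ)) + ∑ j, pq.2 j * (a (w j) : ℤ)) = 0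
                then 1 else 0) := by
    rw [← intervalIntegral.integral_ofReal,
      intervalIntegral.integral_congr (g := fun x =>
        ∑ pq ∈ (Fintype.piFinset (fun _ : Fin r => Finset.Icc (-(D:ℤ)) D)) ×ˢ
            (Fintype.piFinset (fun _ : Fin s => Finset.Icc (-(D:ℤ)) D)),
          ((∏ i, (c (pq.1 i) : ℂ)) * ∏ j, (c (pq.2 j) : ℂ))
            * Eexp ((∑ i, pq.1 i * (a (v i) : ℤ)) + ∑ j, pq.2 j * (a (w j) : ℤ)) x)
        (fun x _ => hprod12 x),
      Eexp_integral_sum]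
  -- conclude
  rw [← Complex.ofReal_inj, Complex.ofReal_mul, hI12, hI1, hI2,
    Finset.sum_mul_sum, ← Finset.sum_product']
  refine Finset.sum_congr rfl fun pq hpq => ?_
  obtain ⟨hp, hq⟩ := Finset.mem_product.mp hpq
  have hps : ∀ i, |pq.1 i| ≤ (D:ℤ) := fun i => by
    have := Fintype.mem_piFinset.mp hp i
    rw [Finset.mem_Icc] at this
    exact abs_le.mpr this
  have hqs : ∀ j, |pq.2 j| ≤ (D:ℤ) := fun j => by
    have := Fintype.mem_piFinset.mp hq j
    rw [Finset.mem_Icc] at this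
    exact abs_le.mpr this
  by_cases hz : (∑ i, pq.1 i * (a (v i) : ℤ)) + (∑ j, pq.2 j * (a (w j) : ℤ)) = 0
  · have hz1 := freq_split a hpos hdvd hgap k D M hMD r s hrs v w
      (fun i j => hsep (v i) (hv i) (w j) (hw j)) pq.1 pq.2 hps hqs hz
    have hz2 : (∑ j, pq.2 j * (a (w j) : ℤ)) = 0 := by omega
    rw [if_pos hz, if_pos hz1, if_pos hz2]
    ring
  · rw [if_neg hz]
    by_cases hz1 : (∑ i, pq.1 i * (a (v i) : ℤ)) = 0
    · have hz2 : ¬ (∑ j, pq.2 j * (a (w j) : ℤ)) = 0 := fun hz2 => hz (by omega)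
      rw [if_pos hz1, if_neg hz2]
      ring
    · rw [if_neg hz1]
      ring
end

section
/- Let (a_n) be a sequence of positive integers satisfying ρ ≥ 3 and a_{n+1}/(n^{1-1/ρ} a_n) → ∞ as n → ∞. Then Σ_{k=⌈n^{1/2ρ}⌉}^n a_k/a_{k+1} = o(n^{1/ρ}) as n → ∞. -/
open Filter Real in
lemma key_ineq (α : ℝ) (hα0 : 0 < α) (hα1 : α ≤ 1) (n : ℕ) :
    (n : ℝ) ^ α + α * ((n : ℝ) + 1) ^ (α - 1) ≤ ((n : ℝ) + 1) ^ α := by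
  set y : ℝ := (n : ℝ) + 1 with hy
  have hy0 : 0 < y := by positivity
  have hy1 : (1:ℝ) ≤ y := by
    have : (0:ℝ) ≤ (n:ℝ) := Nat.cast_nonneg n
    simp only [hy]; linarith
  have hs : (-1 : ℝ) ≤ -1 / y := by
    rw [neg_div, neg_le_neg_iff, div_le_one hy0]
    exact hy1
  have hb := rpow_one_add_le_one_add_mul_self hs hα0.le hα1
  have hxy : (n : ℝ) = y * (1 + -1 / y) := by
    field_simp
    rw [hy]; ring
  have h1 : (n : ℝ) ^ α = y ^ α * (1 + -1 / y) ^ α := by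
    rw [hxy, Real.mul_rpow hy0.le (by linarith)]
  have h2 : y ^ α * (1 + -1 / y) ^ α ≤ y ^ α * (1 + α * (-1 / y)) :=
    mul_le_mul_of_nonneg_left hb (Real.rpow_nonneg hy0.le _)
  have h3 : y ^ α * (1 + α * (-1 / y)) = y ^ α - α * y ^ (α - 1) := by
    have : y ^ (α - 1) = y ^ α / y := by
      rw [Real.rpow_sub hy0, Real.rpow_one]
    rw [this]; field_simp; ring
  linarith [h1, h2, h3]

open Filter Real in
lemma sum_rpow_bound (α : ℝ) (hα0 : 0 < α) (hα1 : α ≤ 1) (n : ℕ) :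
    ∑ k ∈ Finset.Icc 1 n, (k : ℝ) ^ (α - 1) ≤ (n : ℝ) ^ α / α := by
  induction n with
  | zero => simp [Real.zero_rpow hα0.ne']
  | succ n ih =>
      rw [Finset.sum_Icc_succ_top (by omega : 1 ≤ n + 1)]
      have h := key_ineq α hα0 hα1 n
      have : ((n : ℝ) + 1) ^ (α - 1) ≤ (((n : ℝ) + 1) ^ α - (n : ℝ) ^ α) / α := by
        rw [le_div_iff₀ hα0]; linarith
      push_cast
      have hn1 : ((n:ℝ) + 1) = ((n+1 : ℕ) : ℝ) := by push_cast; ring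
      calc ∑ k ∈ Finset.Icc 1 n, (k : ℝ) ^ (α - 1) + ((n:ℝ) + 1) ^ (α - 1)
          ≤ (n : ℝ) ^ α / α + (((n : ℝ) + 1) ^ α - (n : ℝ) ^ α) / α := by
            exact add_le_add ih this
        _ = ((n : ℝ) + 1) ^ α / α := by ring

open Filter Real in
/-- If `ρ ≥ 3` and `a (n+1) / (n^(1 - 1/ρ) a n) → ∞`, then
`∑_{k = ⌈n^(1/(2ρ))⌉}^n a k / a (k+1) = o(n^(1/ρ))`. -/
theorem stmt12 (a : ℕ → ℕ) (hpos : ∀ n, 0 < a n) (ρ : ℕ) (hρ : 3 ≤ ρ)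
    (hgap : Tendsto (fun n : ℕ => (a (n + 1) : ℝ) / ((n : ℝ) ^ ((1 : ℝ) - 1 / ρ) * a n))
      atTop atTop) :
    (fun n : ℕ => ∑ k ∈ Finset.Icc ⌈(n : ℝ) ^ ((1 : ℝ) / (2 * ρ))⌉₊ n, (a k : ℝ) / a (k + 1))
      =o[atTop] (fun n : ℕ => (n : ℝ) ^ ((1 : ℝ) / ρ)) := by
  have hρ0 : (0:ℝ) < (ρ:ℝ) := by positivity
  set α : ℝ := 1 / ρ with hα
  have hα0 : 0 < α := by positivity
  have hα1 : α ≤ 1 := by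
    rw [hα, div_le_one hρ0]
    exact_mod_cast le_trans (by norm_num) hρ
  rw [Asymptotics.isLittleO_iff]
  intro c hc
  -- eventual per-term bound
  have hev : ∀ᶠ k in atTop, (a (k+1) : ℝ) / ((k : ℝ) ^ ((1:ℝ) - 1/ρ) * a k) ≥ ρ / c :=
    hgap.eventually_ge_atTop _
  obtain ⟨N, hN⟩ := hev.exists_forall_of_atTop
  -- eventually ceil ≥ max N 1
  have hceil : Tendsto (fun n : ℕ => ⌈(n : ℝ) ^ ((1 : ℝ) / (2 * ρ))⌉₊) atTop atTop := by
    exact tendsto_nat_ceil_atTop.comp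
      ((tendsto_rpow_atTop (by positivity)).comp tendsto_natCast_atTop_atTop)
  filter_upwards [hceil.eventually_ge_atTop (max N 1)] with n hn
  set m := ⌈(n : ℝ) ^ ((1 : ℝ) / (2 * ρ))⌉₊ with hm
  have hterm : ∀ k ∈ Finset.Icc m n, (a k : ℝ) / a (k+1) ≤ (c / ρ) * (k:ℝ) ^ (α - 1) := by
    intro k hk
    simp only [Finset.mem_Icc] at hk
    have hk1 : 1 ≤ k := le_trans (le_trans (le_max_right N 1) hn) hk.1
    have hkN : N ≤ k := le_trans (le_trans (le_max_left N 1) hn) hk.1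
    have hkpos : (0:ℝ) < (k:ℝ) := by exact_mod_cast hk1
    have hk' := hN k hkN
    have hden : (0:ℝ) < (k : ℝ) ^ ((1:ℝ) - 1/ρ) * a k := by
      have := hpos k
      positivity
    have hcρ : (0:ℝ) < (ρ:ℝ) / c := by positivity
    have hineq : (ρ / c) * ((k : ℝ) ^ ((1:ℝ) - 1/ρ) * a k) ≤ a (k+1) := by
      rw [ge_iff_le, le_div_iff₀ hden] at hk'
      linarith
    have hap : (0:ℝ) < (a (k+1) : ℝ) := by exact_mod_cast hpos (k+1)
    rw [div_le_iff₀ hap]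
    set P : ℝ := (k : ℝ) ^ ((1:ℝ) - 1/ρ) with hP
    set Q : ℝ := (k:ℝ) ^ (α-1) with hQ
    have hPQ : Q * P = 1 := by
      rw [hQ, hP, ← Real.rpow_add hkpos]
      have : α - 1 + ((1:ℝ) - 1/ρ) = 0 := by rw [hα]; ring
      rw [this, Real.rpow_zero]
    have hcc : c / ρ * (ρ / c) = 1 := by field_simp
    calc (a k : ℝ) = Q * P * (c / ρ * (ρ / c)) * a k := by rw [hPQ, hcc]; ring
      _ = (c/ρ) * Q * ((ρ/c) * (P * a k)) := by ring
      _ ≤ (c/ρ) * Q * a (k+1) := by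
          apply mul_le_mul_of_nonneg_left hineq
          positivity
  have hsum : ∑ k ∈ Finset.Icc m n, (a k : ℝ) / a (k+1)
      ≤ (c / ρ) * ((n:ℝ) ^ α / α) := by
    calc ∑ k ∈ Finset.Icc m n, (a k : ℝ) / a (k+1)
        ≤ ∑ k ∈ Finset.Icc m n, (c / ρ) * (k:ℝ) ^ (α - 1) := Finset.sum_le_sum hterm
      _ ≤ ∑ k ∈ Finset.Icc 1 n, (c / ρ) * (k:ℝ) ^ (α - 1) := by
          apply Finset.sum_le_sum_of_subset_of_nonneg
          · apply Finset.Icc_subset_Icc_left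
            exact le_trans (le_trans (le_max_right N 1) hn) le_rfl
          · intro i _ _
            positivity
      _ = (c / ρ) * ∑ k ∈ Finset.Icc 1 n, (k:ℝ) ^ (α - 1) := by
          rw [Finset.mul_sum]
      _ ≤ (c / ρ) * ((n:ℝ) ^ α / α) := by
          apply mul_le_mul_of_nonneg_left (sum_rpow_bound α hα0 hα1 n)
          positivity
  have hfinal : (c / ρ) * ((n:ℝ) ^ α / α) = c * (n:ℝ) ^ α := by
    rw [hα]; field_simp
  rw [hfinal] at hsum
  have hnonneg : 0 ≤ ∑ k ∈ Finset.Icc m n, (a k : ℝ) / a (k+1) := by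
    apply Finset.sum_nonneg
    intro i _
    positivity
  rw [Real.norm_eq_abs, Real.norm_eq_abs, abs_of_nonneg hnonneg,
    abs_of_nonneg (Real.rpow_nonneg (Nat.cast_nonneg n) _)]
  exact hsum
end

section
/- Let (a_n) be a lacunary sequence satisfying the large gap condition a_{n+1}/a_n → ∞, let f be a real, even, centered trigonometric polynomial of degree D (not identically zero), U ~ Unif(0,1), X_j = f(a_j U), and S_n = Σ_{j=1}^n X_j. Then E[S_n^2] = n·E[X_1^2] + O(1) as n → ∞. -/
section helper
open Real Filter intervalIntegral
lemma myIntCos (m : ℤ) : (∫ x in (0:ℝ)..1, Real.cos (2*π*m*x)) = if m = 0 then 1 else 0 := by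
  rcases eq_or_ne m 0 with h|h
  · simp [h]
  · rw [if_neg h]
    have hc : (2*π*m : ℝ) ≠ 0 := by
      have : (m:ℝ) ≠ 0 := Int.cast_ne_zero.mpr h
      have := Real.pi_ne_zero
      positivity
    have heq : (∫ x in (0:ℝ)..1, Real.cos (2*π*m*x)) = (2*π*m)⁻¹ • ∫ x in (2*π*m*0)..(2*π*m*1), Real.cos x := by
      rw [← integral_comp_mul_left _ hc]
    have h1 : Real.sin (2*π*(m:ℝ)) = 0 := by
      have := Real.sin_int_mul_pi (2*m)
      push_cast at this
      convert this using 2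
      ring
    rw [heq, integral_cos]
    simp [h1]

lemma myIntCosCos (m m' : ℤ) : (∫ x in (0:ℝ)..1, Real.cos (2*π*m*x) * Real.cos (2*π*m'*x))
    = ((if m = m' then (1:ℝ) else 0) + (if m = -m' then 1 else 0)) / 2 := by
  have key : ∀ x : ℝ, Real.cos (2*π*m*x) * Real.cos (2*π*m'*x)
      = (Real.cos (2*π*((m-m' : ℤ) : ℝ)*x) + Real.cos (2*π*((m+m' : ℤ) : ℝ)*x)) / 2 := by
    intro x
    have e1 : (2*π*((m-m' : ℤ) : ℝ)*x) = 2*π*m*x - 2*π*m'*x := by push_cast; ring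
    have e2 : (2*π*((m+m' : ℤ) : ℝ)*x) = 2*π*m*x + 2*π*m'*x := by push_cast; ring
    rw [e1, e2, Real.cos_sub, Real.cos_add]
    ring
  simp_rw [key]
  have i1 : IntervalIntegrable (fun x => Real.cos (2*π*((m-m' : ℤ) : ℝ)*x)) MeasureTheory.volume (0:ℝ) 1 :=
    (Real.continuous_cos.comp (by continuity)).intervalIntegrable _ _
  have i2 : IntervalIntegrable (fun x => Real.cos (2*π*((m+m' : ℤ) : ℝ)*x)) MeasureTheory.volume (0:ℝ) 1 :=
    (Real.continuous_cos.comp (by continuity)).intervalIntegrable _ _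
  rw [intervalIntegral.integral_div, intervalIntegral.integral_add i1 i2, myIntCos, myIntCos]
  congr 2
  · simp [sub_eq_zero]
  · simp [add_eq_zero_iff_eq_neg]

lemma myCT (D : ℕ) (c : ℤ → ℝ) (f : ℝ → ℝ)
    (hf : ∀ x, f x = ∑ d ∈ Finset.Icc (-(D:ℤ)) D, c d * Real.cos (2 * π * d * x))
    (p q : ℕ) :
    (∫ x in (0:ℝ)..1, f (p * x) * f (q * x))
      = ∑ d ∈ Finset.Icc (-(D:ℤ)) D, ∑ e ∈ Finset.Icc (-(D:ℤ)) D,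
          c d * c e * (((if (d * p : ℤ) = e * q then (1:ℝ) else 0)
            + (if (d * p : ℤ) = -(e * q) then 1 else 0)) / 2) := by
  have hterm : ∀ d e : ℤ, ∀ x : ℝ,
      (c d * Real.cos (2*π*d*((p:ℝ)*x))) * (c e * Real.cos (2*π*e*((q:ℝ)*x)))
      = c d * c e * (Real.cos (2*π*((d*p : ℤ):ℝ)*x) * Real.cos (2*π*((e*q : ℤ):ℝ)*x)) := by
    intro d e x
    have a1 : 2*π*(d:ℝ)*((p:ℝ)*x) = 2*π*((d*p : ℤ):ℝ)*x := by push_cast; ring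
    have a2 : 2*π*(e:ℝ)*((q:ℝ)*x) = 2*π*((e*q : ℤ):ℝ)*x := by push_cast; ring
    rw [a1, a2]; ring
  simp_rw [hf, Finset.sum_mul_sum, hterm]
  rw [intervalIntegral.integral_finset_sum]
  · refine Finset.sum_congr rfl fun d hd => ?_
    rw [intervalIntegral.integral_finset_sum]
    · refine Finset.sum_congr rfl fun e he => ?_
      rw [intervalIntegral.integral_const_mul, myIntCosCos]
    · intro e he
      apply Continuous.intervalIntegrable
      fun_prop
  · intro d hd
    apply Continuous.intervalIntegrable
    fun_prop

lemma myDiag (D : ℕ) (c : ℤ → ℝ) (p : ℕ) (hp : 0 < p) :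
    (∑ d ∈ Finset.Icc (-(D:ℤ)) D, ∑ e ∈ Finset.Icc (-(D:ℤ)) D,
      c d * c e * (((if (d * p : ℤ) = e * p then (1:ℝ) else 0)
        + (if (d * p : ℤ) = -(e * p) then 1 else 0)) / 2))
    = ∑ d ∈ Finset.Icc (-(D:ℤ)) D, ∑ e ∈ Finset.Icc (-(D:ℤ)) D,
      c d * c e * (((if d = e then (1:ℝ) else 0) + (if d = -e then 1 else 0)) / 2) := by
  refine Finset.sum_congr rfl fun d _ => Finset.sum_congr rfl fun e _ => ?_
  have hp' : ((p:ℤ)) ≠ 0 := by exact_mod_cast hp.ne'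
  have h1 : ((d * p : ℤ) = e * p) ↔ (d = e) := mul_left_inj' hp'
  have h2 : ((d * p : ℤ) = -(e * p)) ↔ (d = -e) := by
    rw [← neg_mul]; exact mul_left_inj' hp'
  simp only [h1, h2]

lemma myVanish (D : ℕ) (c : ℤ → ℝ) (h0 : c 0 = 0) (p q : ℕ) (hp : 0 < p) (hq : D * p < q) :
    (∑ d ∈ Finset.Icc (-(D:ℤ)) D, ∑ e ∈ Finset.Icc (-(D:ℤ)) D,
      c d * c e * (((if (d * p : ℤ) = e * q then (1:ℝ) else 0)
        + (if (d * p : ℤ) = -(e * q) then 1 else 0)) / 2)) = 0 := by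
  refine Finset.sum_eq_zero fun d hd => Finset.sum_eq_zero fun e he => ?_
  rcases eq_or_ne d 0 with rfl | hd0
  · simp [h0]
  rcases eq_or_ne e 0 with rfl | he0
  · simp [h0]
  have hdD : |d| ≤ (D:ℤ) := by
    rw [abs_le]; exact ⟨(Finset.mem_Icc.1 hd).1, (Finset.mem_Icc.1 hd).2⟩
  have he1 : 1 ≤ |e| := Int.one_le_abs (by exact_mod_cast he0)
  have hkey : ¬ (|d| * (p:ℤ) = |e| * q) := by
    intro h
    have h1 : |d| * (p:ℤ) ≤ D * p :=
      mul_le_mul_of_nonneg_right hdD (by positivity)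
    have h2 : (q:ℤ) ≤ |e| * q := le_mul_of_one_le_left (by positivity) he1
    have h3 : (D:ℤ) * p < q := by exact_mod_cast hq
    omega
  have i1 : ¬ ((d * p : ℤ) = e * q) := by
    intro h
    apply hkey
    have := congrArg (|·|) h
    simpa [abs_mul, abs_of_nonneg (show (0:ℤ) ≤ p by positivity),
      abs_of_nonneg (show (0:ℤ) ≤ q by positivity)] using this
  have i2 : ¬ ((d * p : ℤ) = -(e * q)) := by
    intro h
    apply hkey
    have := congrArg (|·|) h
    simpa [abs_mul, abs_of_nonneg (show (0:ℤ) ≤ p by positivity),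
      abs_of_nonneg (show (0:ℤ) ≤ q by positivity)] using this
  simp [i1, i2]

end helper


open Real Filter in
/-- Under the large gap condition `a (n+1) / a n → ∞`, for a real, even, centered
trigonometric polynomial `f ≢ 0` of degree `D`, `E[S_n ^ 2] = n E[X_1 ^ 2] + O(1)`,
where `S_n = ∑_{j=1}^n f (a_j U)` and `X_1 = f U`, `U` uniform on `[0,1]`. -/
theorem stmt13 (D : ℕ) (c : ℤ → ℝ) (hsym : ∀ d, c (-d) = c d) (h0 : c 0 = 0)
    (hne : ∃ d ∈ Finset.Icc (1:ℤ) D, c d ≠ 0)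
    (f : ℝ → ℝ)
    (hf : ∀ x, f x = ∑ d ∈ Finset.Icc (-(D:ℤ)) D, c d * Real.cos (2 * π * d * x))
    (a : ℕ → ℕ) (hpos : ∀ n, 0 < a n)
    (hgap : Tendsto (fun n : ℕ => (a (n + 1) : ℝ) / a n) atTop atTop) :
    (fun n : ℕ => (∫ x in (0:ℝ)..1, (∑ j ∈ Finset.Icc 1 n, f (a j * x)) ^ 2)
        - n * ∫ x in (0:ℝ)..1, (f (a 1 * x)) ^ 2)
      =O[atTop] (fun _ : ℕ => (1 : ℝ)) := by
  classical
  obtain ⟨d₀, hd₀, -⟩ := hne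
  have hD1 : 1 ≤ D := by
    have h := Finset.mem_Icc.1 hd₀
    have h' : (1:ℤ) ≤ (D:ℤ) := le_trans h.1 h.2
    exact_mod_cast h'
  have hfc : Continuous f := by
    have hfe : f = fun x => ∑ d ∈ Finset.Icc (-(D:ℤ)) D, c d * Real.cos (2*π*d*x) := funext hf
    rw [hfe]; fun_prop
  -- the cross-term integral
  set CT : ℕ → ℕ → ℝ := fun j k => ∫ x in (0:ℝ)..1, f (a j * x) * f (a k * x) with hCTdef
  have hCTsymm : ∀ j k, CT j k = CT k j := fun j k =>
    intervalIntegral.integral_congr (fun x _ => mul_comm _ _)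
  -- gap consequences
  have hev : ∀ᶠ n in atTop, ((D:ℝ)+1) ≤ (a (n+1) : ℝ) / a n := hgap.eventually_ge_atTop _
  obtain ⟨N, hN⟩ := eventually_atTop.1 hev
  have hstep : ∀ n, N ≤ n → (D+1) * a n ≤ a (n+1) := by
    intro n hn
    have h1 := hN n hn
    have h2 : (0:ℝ) < a n := by exact_mod_cast hpos n
    rw [le_div_iff₀ h2] at h1
    exact_mod_cast h1
  have hmono : ∀ j k, N ≤ j → j ≤ k → a j ≤ a k := by
    intro j k hj hjk
    induction k, hjk using Nat.le_induction with
    | base => exact le_refl _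
    | succ k hk ih =>
      have h1 := hstep k (le_trans hj hk)
      have h2 := hpos k
      nlinarith
  have hgrow : ∀ j k, N ≤ j → j < k → D * a j < a k := by
    intro j k hj hjk
    have h1 : (D+1) * a j ≤ a (j+1) := hstep j hj
    have h2 : a (j+1) ≤ a k := hmono (j+1) k (by omega) hjk
    have h3 := hpos j
    nlinarith
  set B := (Finset.range (N+1)).sup a with hB
  have hBle : ∀ j, j ≤ N → a j ≤ B := fun j hj =>
    Finset.le_sup (Finset.mem_range.2 (by omega))
  have hpow : ∀ m, 2^m * a N ≤ a (N + m) := by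
    intro m
    induction m with
    | zero => simp
    | succ m ih =>
      have h1 : (D+1) * a (N+m) ≤ a (N+m+1) := hstep _ (by omega)
      have h2 := hpos (N+m)
      have h3 : 2^(m+1) * a N = 2 * (2^m * a N) := by ring
      have : N + (m+1) = N + m + 1 := by omega
      rw [this, h3]
      nlinarith
  set M := N + (D * B + 1) with hM
  have haM : D * B < a M := by
    have h1 := hpow (D*B+1)
    have h2 : D*B < 2^(D*B) := Nat.lt_two_pow_self
    have h4 := hpos N
    have h5 : 2^(D*B+1) = 2 * 2^(D*B) := by ring
    nlinarith
  have hNM : N ≤ M := by omega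
  have hvan : ∀ j k, j < k → M ≤ k → D * a j < a k := by
    intro j k hjk hMk
    rcases lt_or_ge j N with hjN | hjN
    · have h1 : a j ≤ B := hBle j (by omega)
      have h2 : a M ≤ a k := hmono M k hNM hMk
      have h3 : D * a j ≤ D * B := Nat.mul_le_mul_left _ h1
      omega
    · exact hgrow j k hjN hjk
  have hz : ∀ j k, j ≠ k → (M ≤ j ∨ M ≤ k) → CT j k = 0 := by
    have key : ∀ j k, j < k → M ≤ k → CT j k = 0 := by
      intro j k hjk hMk
      show (∫ x in (0:ℝ)..1, f (a j * x) * f (a k * x)) = 0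
      rw [myCT D c f hf]
      exact myVanish D c h0 (a j) (a k) (hpos j) (hvan j k hjk hMk)
    intro j k hjk hMjk
    rcases lt_trichotomy j k with h | h | h
    · exact key j k h (by omega)
    · omega
    · rw [hCTsymm]
      exact key k j h (by omega)
  have hint : ∀ j k : ℕ, IntervalIntegrable (fun x => f (a j * x) * f (a k * x))
      MeasureTheory.volume (0:ℝ) 1 := by
    intro j k
    apply Continuous.intervalIntegrable
    exact (hfc.comp (by fun_prop)).mul (hfc.comp (by fun_prop))
  have hexp : ∀ n : ℕ, (∫ x in (0:ℝ)..1, (∑ j ∈ Finset.Icc 1 n, f (a j * x))^2)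
      = ∑ j ∈ Finset.Icc 1 n, ∑ k ∈ Finset.Icc 1 n, CT j k := by
    intro n
    have h1 : ∀ x : ℝ, (∑ j ∈ Finset.Icc 1 n, f (a j * x))^2
        = ∑ j ∈ Finset.Icc 1 n, ∑ k ∈ Finset.Icc 1 n, f (a j * x) * f (a k * x) := by
      intro x; rw [sq, Finset.sum_mul_sum]
    simp_rw [h1]
    rw [intervalIntegral.integral_finset_sum]
    · exact Finset.sum_congr rfl fun j _ =>
        intervalIntegral.integral_finset_sum (fun k _ => hint j k)
    · intro j _
      apply Continuous.intervalIntegrable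
      apply continuous_finset_sum
      intro k _
      exact (hfc.comp (by fun_prop)).mul (hfc.comp (by fun_prop))
  have hsig : (∫ x in (0:ℝ)..1, (f (a 1 * x))^2) = CT 1 1 :=
    intervalIntegral.integral_congr (fun x _ => pow_two _)
  have hdiag : ∀ j : ℕ, CT j j = CT 1 1 := by
    intro j
    show (∫ x in (0:ℝ)..1, f (a j * x) * f (a j * x))
      = ∫ x in (0:ℝ)..1, f (a 1 * x) * f (a 1 * x)
    rw [myCT D c f hf, myCT D c f hf, myDiag D c (a j) (hpos j), myDiag D c (a 1) (hpos 1)]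
  have hdiff : ∀ n : ℕ, (∫ x in (0:ℝ)..1, (∑ j ∈ Finset.Icc 1 n, f (a j * x))^2)
      - n * ∫ x in (0:ℝ)..1, (f (a 1 * x))^2
      = ∑ j ∈ Finset.Icc 1 n, ∑ k ∈ (Finset.Icc 1 n).erase j, CT j k := by
    intro n
    rw [hexp n, hsig]
    have h2 : ∀ j ∈ Finset.Icc 1 n, ∑ k ∈ Finset.Icc 1 n, CT j k
        = CT 1 1 + ∑ k ∈ (Finset.Icc 1 n).erase j, CT j k := by
      intro j hj
      rw [← Finset.add_sum_erase _ _ hj, hdiag j]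
    rw [Finset.sum_congr rfl h2, Finset.sum_add_distrib, Finset.sum_const, Nat.card_Icc,
        Nat.add_sub_cancel, nsmul_eq_mul]
    ring
  have hconst : ∀ n, M ≤ n → (∑ j ∈ Finset.Icc 1 n, ∑ k ∈ (Finset.Icc 1 n).erase j, CT j k)
      = ∑ j ∈ Finset.Icc 1 M, ∑ k ∈ (Finset.Icc 1 M).erase j, CT j k := by
    intro n hn
    have hsub : Finset.Icc 1 M ⊆ Finset.Icc 1 n := Finset.Icc_subset_Icc_right hn
    rw [← Finset.sum_subset hsub]
    · refine Finset.sum_congr rfl fun j hj => ?_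
      have hjM : j ≤ M := (Finset.mem_Icc.1 hj).2
      rw [← Finset.sum_subset (Finset.erase_subset_erase j hsub)]
      intro k hk hk'
      have hk1 : k ≠ j := Finset.ne_of_mem_erase hk
      have hk2 := Finset.mem_Icc.1 (Finset.mem_of_mem_erase hk)
      have hkM : M < k := by
        by_contra h'
        exact hk' (Finset.mem_erase.2 ⟨hk1, Finset.mem_Icc.2 ⟨hk2.1, by omega⟩⟩)
      exact hz j k (by omega) (Or.inr (by omega))
    · intro j hj hj'
      have h1 := Finset.mem_Icc.1 hj
      have hjM : M < j := by
        by_contra h'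
        exact hj' (Finset.mem_Icc.2 ⟨h1.1, by omega⟩)
      refine Finset.sum_eq_zero fun k hk => ?_
      exact hz j k (Ne.symm (Finset.ne_of_mem_erase hk)) (Or.inl (by omega))
  rw [Asymptotics.isBigO_iff]
  refine ⟨|∑ j ∈ Finset.Icc 1 M, ∑ k ∈ (Finset.Icc 1 M).erase j, CT j k|, ?_⟩
  filter_upwards [eventually_ge_atTop M] with n hn
  rw [hdiff n, hconst n hn]
  simp
end
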